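/- Let G be a bipartite simple graph on n ≥ 8 vertices. Then the Harary index of the complement of G satisfies H(Ḡ) > (5n² − 23n + 28)/(2(n − 1)). -/

import Mathlib

open Finset SimpleGraph

noncomputable section

/-- The Wiener index of a graph `G`: the sum of graph distances over all unordered pairs
of distinct vertices, i.e. half the sum over ordered pairs. -/
def wienerIndex {V : Type*} [Fintype V] (G : SimpleGraph V) : ℝ :=
  (∑ u : V, ∑ v : V, (G.dist u v : ℝ)) / 2

open Classical in
/-- The Harary index of a graph `G`: the sum of reciprocals of graph distances over all
unordered pairs of distinct vertices, where pairs in different components contribute `0`. -/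
def hararyIndex {V : Type*} [Fintype V] (G : SimpleGraph V) : ℝ :=
  (∑ u : V, ∑ v : V, if u ≠ v ∧ G.Reachable u v then ((G.dist u v : ℝ))⁻¹ else 0) / 2

/-- The distance matrix of a graph. -/
def distMatrix {V : Type*} [Fintype V] (G : SimpleGraph V) : Matrix V V ℝ :=
  fun u v => (G.dist u v : ℝ)

open Classical in
/-- The Harary (reciprocal distance) matrix of a graph. -/
def hararyMatrix {V : Type*} [Fintype V] (G : SimpleGraph V) : Matrix V V ℝ :=
  fun u v => if u ≠ v ∧ G.Reachable u v then ((G.dist u v : ℝ))⁻¹ else 0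

/-- The distance spectral radius: the largest eigenvalue of the distance matrix. -/
def distSpectralRadius {V : Type*} [Fintype V] [DecidableEq V] (G : SimpleGraph V) : ℝ :=
  sSup (spectrum ℝ (distMatrix G))

/-- The Harary spectral radius: the largest eigenvalue of the Harary matrix. -/
def hararySpectralRadius {V : Type*} [Fintype V] [DecidableEq V] (G : SimpleGraph V) : ℝ :=
  sSup (spectrum ℝ (hararyMatrix G))

/-- A graph on `n` vertices is pancyclic if it contains a cycle of every length `ℓ`
with `3 ≤ ℓ ≤ n`. -/
def Pancyclic {V : Type*} [Fintype V] (G : SimpleGraph V) : Prop :=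
  ∀ ℓ : ℕ, 3 ≤ ℓ → ℓ ≤ Fintype.card V → ∃ (v : V) (c : G.Walk v v), c.IsCycle ∧ c.length = ℓ

/-- A graph is bipartite iff it is 2-colorable. -/
def IsBipartite {V : Type*} (G : SimpleGraph V) : Prop := G.Colorable 2

/-- A graph is a complete bipartite graph if it is isomorphic to some `K_{a,b}`. -/
def IsCompleteBipartite {V : Type*} (G : SimpleGraph V) : Prop :=
  ∃ a b : ℕ, Nonempty (G ≃g completeBipartiteGraph (Fin a) (Fin b))

/-- The join `G ∨ H` of two graphs: take disjoint copies of `G` and `H` and add all edges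
between them. -/
def graphJoin {α β : Type*} (G : SimpleGraph α) (H : SimpleGraph β) : SimpleGraph (α ⊕ β) where
  Adj u v := match u, v with
    | Sum.inl u, Sum.inl v => G.Adj u v
    | Sum.inr u, Sum.inr v => H.Adj u v
    | Sum.inl _, Sum.inr _ => True
    | Sum.inr _, Sum.inl _ => True
  symm := ⟨fun u v => by
    cases u <;> cases v <;> first | exact G.adj_symm | exact H.adj_symm | exact fun _ => trivial⟩
  loopless := ⟨fun u => by cases u <;> simp⟩

/-- The family 𝒩𝒫 of exceptional graphs (on `n = Fintype.card V` vertices for the first one). -/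
def InNPFamily {V : Type*} [Fintype V] (G : SimpleGraph V) : Prop :=
  Nonempty (G ≃g graphJoin (⊤ : SimpleGraph (Fin 2))
      ((⊤ : SimpleGraph (Fin (Fintype.card V - 4))) ⊕g (⊥ : SimpleGraph (Fin 2)))) ∨
  Nonempty (G ≃g graphJoin (⊤ : SimpleGraph (Fin 5)) (⊥ : SimpleGraph (Fin 6))) ∨
  Nonempty (G ≃g graphJoin (⊤ : SimpleGraph (Fin 3))
      ((⊤ : SimpleGraph (Fin 2)) ⊕g (⊥ : SimpleGraph (Fin 3)))) ∨
  Nonempty (G ≃g graphJoin (⊤ : SimpleGraph (Fin 3))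
      (completeBipartiteGraph (Fin 1) (Fin 4) ⊕g (⊥ : SimpleGraph (Fin 1)))) ∨
  Nonempty (G ≃g graphJoin (⊤ : SimpleGraph (Fin 3))
      (completeBipartiteGraph (Fin 1) (Fin 3) ⊕g (⊤ : SimpleGraph (Fin 2)))) ∨
  Nonempty (G ≃g graphJoin (graphJoin (⊤ : SimpleGraph (Fin 2)) (⊥ : SimpleGraph (Fin 2)))
      (⊥ : SimpleGraph (Fin 5))) ∨
  Nonempty (G ≃g graphJoin (⊤ : SimpleGraph (Fin 4)) (⊥ : SimpleGraph (Fin 5))) ∨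
  Nonempty (G ≃g graphJoin (completeBipartiteGraph (Fin 1) (Fin 2)) (⊥ : SimpleGraph (Fin 4))) ∨
  Nonempty (G ≃g graphJoin (⊤ : SimpleGraph (Fin 2))
      (completeBipartiteGraph (Fin 1) (Fin 3) ⊕g (⊥ : SimpleGraph (Fin 1)))) ∨
  Nonempty (G ≃g graphJoin (⊤ : SimpleGraph (Fin 3)) (⊥ : SimpleGraph (Fin 4)))

/-- For a bipartite simple graph `G` on `n ≥ 8` vertices,
`H(Ḡ) > (5n² − 23n + 28)/(2(n − 1))`. -/
theorem harary_compl_gt_of_bipartite {V : Type*} [Fintype V] (G : SimpleGraph V) (n : ℕ)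
    (hn : Fintype.card V = n) (h8 : 8 ≤ n) (hbip : _root_.IsBipartite G) :
    hararyIndex Gᶜ > (5 * (n : ℝ) ^ 2 - 23 * n + 28) / (2 * ((n : ℝ) - 1)) := by
  classical
  obtain ⟨c⟩ := hbip
  -- fibers of the coloring
  set fib : Fin 2 → ℕ := fun i => (univ.filter (fun v => c v = i)).card with hfib
  -- pointwise lower bound on harary terms
  have hpt : ∀ u v : V, (if u ≠ v ∧ c u = c v then (1:ℝ) else 0) ≤
      (if u ≠ v ∧ Gᶜ.Reachable u v then ((Gᶜ.dist u v : ℝ))⁻¹ else 0) := by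
    intro u v
    by_cases h : u ≠ v ∧ c u = c v
    · have hadj : Gᶜ.Adj u v := by
        rw [SimpleGraph.compl_adj]
        exact ⟨h.1, fun hGA => c.valid hGA h.2⟩
      have hd : Gᶜ.dist u v = 1 := SimpleGraph.dist_eq_one_iff_adj.mpr hadj
      rw [if_pos h, if_pos ⟨h.1, hadj.reachable⟩, hd]
      norm_num
    · rw [if_neg h]
      have : (0:ℝ) ≤ if u ≠ v ∧ Gᶜ.Reachable u v then ((Gᶜ.dist u v : ℝ))⁻¹ else 0 := by
        split_ifs with h'
        · positivity
        · exact le_refl 0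
      exact this
  -- sum of the indicator
  have hcount : ∑ u : V, ∑ v : V, (if u ≠ v ∧ c u = c v then (1:ℝ) else 0)
      = (∑ i : Fin 2, ((fib i : ℝ))^2) - n := by
    have h1 : ∀ u v : V, (if u ≠ v ∧ c u = c v then (1:ℝ) else 0)
        = (if c v = c u then (1:ℝ) else 0) - (if v = u then (1:ℝ) else 0) := by
      intro u v
      by_cases huv : u = v <;> by_cases hc : c u = c v <;>
        simp_all [eq_comm]
    simp only [h1, Finset.sum_sub_distrib]
    have h2 : ∀ u : V, ∑ v : V, (if c v = c u then (1:ℝ) else 0) = (fib (c u) : ℝ) := by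
      intro u
      rw [Finset.sum_boole, hfib]
    have h3 : ∀ u : V, ∑ v : V, (if v = u then (1:ℝ) else 0) = 1 := by
      intro u; simp
    simp only [h2, h3, Finset.sum_const, Finset.card_univ, hn, nsmul_eq_mul, mul_one]
    congr 1
    have := Finset.sum_fiberwise' (univ : Finset V) c (fun i => (fib i : ℝ))
    rw [← this]
    refine Finset.sum_congr rfl fun i _ => ?_
    rw [Finset.sum_const, hfib]
    simp [sq]
  have hfibsum : (fib 0 : ℝ) + fib 1 = n := by
    have := Finset.sum_fiberwise (univ : Finset V) c (fun _ => (1:ℝ))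
    simp only [Finset.sum_const, nsmul_eq_mul, mul_one, Finset.card_univ, hn] at this
    rw [Fin.sum_univ_two] at this
    exact_mod_cast this
  -- lower bound the harary index
  have hmain : hararyIndex Gᶜ ≥ ((∑ i : Fin 2, ((fib i : ℝ))^2) - n) / 2 := by
    rw [hararyIndex, ← hcount]
    gcongr
    rename_i u hu v
    exact (hpt _ _).trans (le_of_eq (by congr))
  refine lt_of_lt_of_le ?_ hmain
  rw [Fin.sum_univ_two]
  set x := (fib 0 : ℝ)
  set y := (fib 1 : ℝ)
  have hn8 : (8:ℝ) ≤ n := by exact_mod_cast h8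
  have hxy : x^2 + y^2 = ((n:ℝ)^2 + (x-y)^2)/2 := by rw [← hfibsum]; ring
  have hA : 0 ≤ (x-y)^2 * ((n:ℝ)-1) :=
    mul_nonneg (sq_nonneg _) (by linarith)
  have hq : (0:ℝ) ≤ (n:ℝ)^2 - 5*n + 8 := by nlinarith [sq_nonneg ((n:ℝ)-3)]
  have hcub : 0 < (n:ℝ)^3 - 13*n^2 + 48*n - 56 := by
    nlinarith [mul_nonneg (sub_nonneg.mpr hn8) hq]
  rw [div_lt_div_iff₀ (by linarith) (by norm_num), hxy]
  nlinarith [hA, hcub]
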